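/- Let y : [0,T) → ℝ^k solve the B_k mean curvature flow ODE (1/2) y_i'(t) = -m₂ - m₁ ∑_{j≠i} 2 y_i(t)/(y_i(t) - y_j(t)), with m₁, m₂ ≥ 0 and y_i(t) pairwise distinct. Let ζ_j(t) = s_j(y_1(t),...,y_k(t)) be the j-th elementary symmetric polynomial along the flow. Then ζ_j'(t) = -2(k-j+1)(m₂ + m₁(k-j)) ζ_{j-1}(t) for 1 ≤ j ≤ k (with ζ_0 = 1). -/

import Mathlib

/-- The `j`-th elementary symmetric polynomial of `v : Fin k → ℝ`. -/
def esymmB {k : ℕ} (j : ℕ) (v : Fin k → ℝ) : ℝ :=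
  ∑ s ∈ Finset.univ.powersetCard j, ∏ i ∈ s, v i

open Finset

lemma erase_sum_comm {α : Type*} [DecidableEq α] (U : Finset α) (g : α → α → ℝ) :
    ∑ i ∈ U, ∑ l ∈ U.erase i, g i l = ∑ l ∈ U, ∑ i ∈ U.erase l, g i l :=
  Finset.sum_comm' (by intro x y; simp only [Finset.mem_erase]; tauto)

lemma sum_pair {α : Type*} [DecidableEq α] (U : Finset α) (g : α → α → ℝ) (c : ℝ)
    (h : ∀ i ∈ U, ∀ l ∈ U, i ≠ l → g i l + g l i = c) :
    (∑ i ∈ U, ∑ l ∈ U.erase i, g i l) * 2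
      = (U.card : ℝ) * ((U.card : ℝ) - 1) * c := by
  have hswap : ∑ i ∈ U, ∑ l ∈ U.erase i, g l i = ∑ i ∈ U, ∑ l ∈ U.erase i, g i l :=
    erase_sum_comm U (fun i l => g l i)
  have key : (∑ i ∈ U, ∑ l ∈ U.erase i, g i l) * 2
      = ∑ i ∈ U, ∑ l ∈ U.erase i, (g i l + g l i) := by
    simp only [Finset.sum_add_distrib, hswap]; ring
  rw [key]
  have hconst : ∀ i ∈ U, ∑ l ∈ U.erase i, (g i l + g l i) = ((U.card : ℝ) - 1) * c := by
    intro i hi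
    rw [Finset.sum_congr rfl (fun l hl => h i hi l (Finset.mem_of_mem_erase hl)
        (fun e => (Finset.mem_erase.1 hl).1 e.symm)), Finset.sum_const,
      Finset.card_erase_of_mem hi, nsmul_eq_mul, Nat.cast_sub (Finset.card_pos.2 ⟨i, hi⟩)]
    push_cast; ring
  rw [Finset.sum_congr rfl hconst, Finset.sum_const, nsmul_eq_mul]; ring

lemma reindexB {k : ℕ} (m : ℕ) (f : Fin k → Finset (Fin k) → ℝ) :
    ∑ S ∈ Finset.univ.powersetCard (m+1), ∑ i ∈ S, f i (S.erase i)
      = ∑ S ∈ Finset.univ.powersetCard m, ∑ i ∈ Finset.univ \ S, f i S := by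
  rw [Finset.sum_sigma', Finset.sum_sigma']
  refine Finset.sum_nbij' (fun p => ⟨p.1.erase p.2, p.2⟩) (fun p => ⟨insert p.2 p.1, p.2⟩)
    ?_ ?_ ?_ ?_ ?_
  · rintro ⟨S, i⟩ hp
    simp only [Finset.mem_sigma, Finset.mem_powersetCard_univ] at hp ⊢
    simp [Finset.card_erase_of_mem hp.2, hp.1, Finset.mem_sdiff]
  · rintro ⟨S, i⟩ hp
    simp only [Finset.mem_sigma, Finset.mem_powersetCard_univ, Finset.mem_sdiff] at hp ⊢
    simp [Finset.card_insert_of_notMem hp.2.2, hp.1]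
  · rintro ⟨S, i⟩ hp
    simp only [Finset.mem_sigma, Finset.mem_powersetCard_univ] at hp
    simp [Finset.insert_erase hp.2]
  · rintro ⟨S, i⟩ hp
    simp only [Finset.mem_sigma, Finset.mem_powersetCard_univ, Finset.mem_sdiff] at hp
    simp [Finset.erase_insert hp.2.2]
  · rintro ⟨S, i⟩ _; rfl

lemma keyB {k : ℕ} (m₁ m₂ : ℝ) (v : Fin k → ℝ) (hv : ∀ i j, i ≠ j → v i ≠ v j)
    (m : ℕ) (hmk : m + 1 ≤ k) :
    ∑ S ∈ Finset.univ.powersetCard (m+1), ∑ i ∈ S, (∏ l ∈ S.erase i, v l) *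
        (-2*m₂ - 4*m₁ * ∑ l ∈ Finset.univ \ {i}, v i / (v i - v l))
      = -2 * ((k:ℝ) - m) * (m₂ + m₁ * ((k:ℝ) - (m+1)))
        * ∑ S ∈ Finset.univ.powersetCard m, ∏ l ∈ S, v l := by
  classical
  have hvsub : ∀ i j : Fin k, i ≠ j → v i - v j ≠ 0 := fun i j h => sub_ne_zero.2 (hv i j h)
  have hmk' : m ≤ k := le_trans (Nat.le_succ m) hmk
  have hn : ∀ S ∈ (Finset.univ : Finset (Fin k)).powersetCard m, ((Finset.univ \ S).card : ℝ) = (k:ℝ) - m := by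
    intro S hS
    rw [Finset.mem_powersetCard_univ] at hS
    rw [Finset.card_sdiff_of_subset (Finset.subset_univ S), Finset.card_univ, Fintype.card_fin, hS,
      Nat.cast_sub hmk']
  rw [reindexB m (fun i T => (∏ l ∈ T, v l) *
      (-2*m₂ - 4*m₁ * ∑ l ∈ Finset.univ \ {i}, v i / (v i - v l)))]
  have split : ∀ S ∈ Finset.univ.powersetCard m, ∀ i ∈ Finset.univ \ S,
      (∏ l ∈ S, v l) * (-2*m₂ - 4*m₁ * ∑ l ∈ Finset.univ \ {i}, v i / (v i - v l))
      = (-2*m₂) * (∏ l ∈ S, v l)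
        + (-4*m₁) * ((∏ l' ∈ S, v l') * ∑ l ∈ S, v i / (v i - v l))
        + (-4*m₁) * ((∏ l' ∈ S, v l') *
            ∑ l ∈ (Finset.univ \ S).erase i, v i / (v i - v l)) := by
    intro S hS i hi
    have hiS : i ∉ S := (Finset.mem_sdiff.1 hi).2
    have hU : Finset.univ \ {i} = S ∪ (Finset.univ \ S).erase i := by
      ext x
      simp only [Finset.mem_sdiff, Finset.mem_singleton, Finset.mem_union, Finset.mem_erase,
        Finset.mem_univ, true_and]
      constructor
      · intro hx
        by_cases hxS : x ∈ S
        · exact Or.inl hxS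
        · exact Or.inr ⟨hx, hxS⟩
      · rintro (hxS | ⟨hx, _⟩)
        · exact fun e => hiS (e ▸ hxS)
        · exact hx
    have hdisj : Disjoint S ((Finset.univ \ S).erase i) :=
      Finset.disjoint_left.2 fun a ha hb =>
        (Finset.mem_sdiff.1 (Finset.mem_of_mem_erase hb)).2 ha
    rw [hU, Finset.sum_union hdisj]
    ring
  rw [Finset.sum_congr rfl (fun S hS => Finset.sum_congr rfl (fun i hi => split S hS i hi))]
  simp only [Finset.sum_add_distrib]
  -- now three double sums A + B + C
  have hA : ∑ S ∈ Finset.univ.powersetCard m, ∑ _i ∈ Finset.univ \ S, (-2*m₂) * (∏ l ∈ S, v l)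
      = (-2*m₂*((k:ℝ)-m)) * ∑ S ∈ Finset.univ.powersetCard m, ∏ l ∈ S, v l := by
    rw [Finset.mul_sum]
    refine Finset.sum_congr rfl fun S hS => ?_
    rw [Finset.sum_const, nsmul_eq_mul, hn S hS]; ring
  have hC : ∑ S ∈ Finset.univ.powersetCard m, ∑ i ∈ Finset.univ \ S,
        (-4*m₁) * ((∏ l' ∈ S, v l') * ∑ l ∈ (Finset.univ \ S).erase i, v i / (v i - v l))
      = (-2*m₁*((k:ℝ)-m)*(((k:ℝ)-m)-1)) * ∑ S ∈ Finset.univ.powersetCard m, ∏ l ∈ S, v l := by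
    rw [Finset.mul_sum]
    refine Finset.sum_congr rfl fun S hS => ?_
    have hD2 : (∑ i ∈ Finset.univ \ S, ∑ l ∈ (Finset.univ \ S).erase i, v i / (v i - v l)) * 2
        = (((Finset.univ \ S).card : ℝ)) * (((Finset.univ \ S).card : ℝ) - 1) * 1 := by
      refine sum_pair _ _ 1 fun i _ l _ hne => ?_
      have h1 : v i - v l ≠ 0 := hvsub i l hne
      have h2 : v l - v i ≠ 0 := hvsub l i (Ne.symm hne)
      field_simp
      ring
    rw [hn S hS] at hD2
    have hD : (∑ i ∈ Finset.univ \ S, ∑ l ∈ (Finset.univ \ S).erase i, v i / (v i - v l))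
        = ((k:ℝ)-m) * (((k:ℝ)-m) - 1) / 2 := by linarith
    calc ∑ i ∈ Finset.univ \ S,
          (-4*m₁) * ((∏ l' ∈ S, v l') * ∑ l ∈ (Finset.univ \ S).erase i, v i / (v i - v l))
        = (-4*m₁) * ((∏ l' ∈ S, v l') *
            ∑ i ∈ Finset.univ \ S, ∑ l ∈ (Finset.univ \ S).erase i, v i / (v i - v l)) := by
          rw [Finset.mul_sum, Finset.mul_sum]
      _ = (-2*m₁*((k:ℝ)-m)*(((k:ℝ)-m)-1)) * ∏ l ∈ S, v l := by rw [hD]; ring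
  have hB : ∑ S ∈ Finset.univ.powersetCard m, ∑ i ∈ Finset.univ \ S,
        (-4*m₁) * ((∏ l' ∈ S, v l') * ∑ l ∈ S, v i / (v i - v l)) = 0 := by
    have hW : ∑ S ∈ Finset.univ.powersetCard m, ∑ i ∈ Finset.univ \ S,
        ((∏ l' ∈ S, v l') * ∑ l ∈ S, v i / (v i - v l)) = 0 := by
      have step : ∀ S ∈ Finset.univ.powersetCard m,
          ∑ i ∈ Finset.univ \ S, ((∏ l' ∈ S, v l') * ∑ l ∈ S, v i / (v i - v l))
          = ∑ l ∈ S, ∑ i ∈ (Finset.univ \ S.erase l).erase l,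
              (v l * ∏ l' ∈ S.erase l, v l') * (v i / (v i - v l)) := by
        intro S hS
        rw [Finset.sum_congr rfl fun i _ => Finset.mul_sum _ _ _, Finset.sum_comm]
        refine Finset.sum_congr rfl fun l hl => ?_
        have hrange : Finset.univ \ S = (Finset.univ \ S.erase l).erase l := by
          ext x
          simp only [Finset.mem_sdiff, Finset.mem_erase, Finset.mem_univ, true_and]
          constructor
          · intro hx; exact ⟨fun e => hx (e ▸ hl), fun h' => hx h'.2⟩
          · rintro ⟨hxl, hx⟩ hxS; exact hx ⟨hxl, hxS⟩
        rw [hrange, ← Finset.mul_prod_erase S v hl]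
      rw [Finset.sum_congr rfl step]
      rcases m with _ | m'
      · simp [Finset.powersetCard_zero]
      · rw [reindexB m' (fun l T => ∑ i ∈ (Finset.univ \ T).erase l,
            (v l * ∏ l' ∈ T, v l') * (v i / (v i - v l)))]
        refine Finset.sum_eq_zero fun T hT => ?_
        have erange : ∀ l ∈ Finset.univ \ T, (Finset.univ \ T).erase l = (Finset.univ \ T).erase l :=
          fun _ _ => rfl
        -- inner: ∑ l ∈ univ \ T, ∑ i ∈ (univ \ T).erase l, g l i = 0 by antisymmetry
        have h0 : (∑ l ∈ Finset.univ \ T, ∑ i ∈ (Finset.univ \ T).erase l,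
            (v l * ∏ l' ∈ T, v l') * (v i / (v i - v l))) * 2
            = (((Finset.univ \ T).card : ℝ)) * (((Finset.univ \ T).card : ℝ) - 1) * 0 := by
          refine sum_pair _ _ 0 fun a _ b _ hne => ?_
          have h1 : v b - v a ≠ 0 := hvsub b a (Ne.symm hne)
          have h2 : v a - v b ≠ 0 := hvsub a b hne
          field_simp
          ring
        have := h0
        linarith
    calc ∑ S ∈ Finset.univ.powersetCard m, ∑ i ∈ Finset.univ \ S,
          (-4*m₁) * ((∏ l' ∈ S, v l') * ∑ l ∈ S, v i / (v i - v l))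
        = (-4*m₁) * ∑ S ∈ Finset.univ.powersetCard m, ∑ i ∈ Finset.univ \ S,
            ((∏ l' ∈ S, v l') * ∑ l ∈ S, v i / (v i - v l)) := by
          rw [Finset.mul_sum]
          exact Finset.sum_congr rfl fun S _ => by rw [Finset.mul_sum]
      _ = 0 := by rw [hW]; ring
  rw [hA, hB, hC]
  push_cast
  ring

/-- If `y` solves the `B_k` MCF ODE `yᵢ' = -2m₂ - 4m₁ ∑_{j≠i} yᵢ/(yᵢ - yⱼ)` with pairwise
distinct coordinates, and `ζ_j(t) = s_j(y(t))`, then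
`ζ_j' = -2(k-j+1)(m₂ + m₁(k-j)) ζ_{j-1}` for `1 ≤ j ≤ k`. -/
theorem stmt_10 {k : ℕ} (T : ℝ) (hT : 0 < T) (m₁ m₂ : ℝ)
    (hm₁ : 0 ≤ m₁) (hm₂ : 0 ≤ m₂)
    (y : ℝ → Fin k → ℝ)
    (hdist : ∀ t ∈ Set.Ico (0 : ℝ) T, ∀ i j, i ≠ j → y t i ≠ y t j)
    (hode : ∀ t ∈ Set.Ico (0 : ℝ) T, ∀ i,
      HasDerivAt (fun s => y s i)
        (-2 * m₂ - 4 * m₁ * ∑ j ∈ Finset.univ \ {i}, y t i / (y t i - y t j)) t) :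
    ∀ j, 1 ≤ j → j ≤ k → ∀ t ∈ Set.Ico (0 : ℝ) T,
      HasDerivAt (fun s => esymmB j (y s))
        (-2 * ((k : ℝ) - j + 1) * (m₂ + m₁ * ((k : ℝ) - j)) * esymmB (j - 1) (y t)) t := by
  intro j hj1 hjk t ht
  obtain ⟨m, rfl⟩ : ∃ m, j = m + 1 := ⟨j - 1, (Nat.succ_pred_eq_of_pos hj1).symm⟩
  have hD : HasDerivAt (fun s => esymmB (m+1) (y s))
      (∑ S ∈ Finset.univ.powersetCard (m+1), ∑ i ∈ S, (∏ l ∈ S.erase i, y t l) •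
        (-2 * m₂ - 4 * m₁ * ∑ l ∈ Finset.univ \ {i}, y t i / (y t i - y t l))) t := by
    unfold esymmB
    exact HasDerivAt.fun_sum fun S _ => HasDerivAt.fun_finsetProd fun i _ => hode t ht i
  convert hD using 1
  simp only [smul_eq_mul]
  rw [keyB m₁ m₂ (y t) (hdist t ht) m hjk]
  simp only [Nat.add_sub_cancel]
  unfold esymmB
  push_cast
  ring
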